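/- Let G=(V,E,cap) be a capacitated graph with maximum degree Δ and A,B,C ⊆ V with A ∪ C = V, A ∩ C = B, and no edges between A∖B and C∖B. Given capacitated dominating sets (X,f) of G[A] and (Y,g) of G[C], the set Z = X ∪ Y ∪ N[B], with the assignment mapping each v ∈ A∖Z to f(v) and each v ∈ C∖Z to g(v), is a capacitated dominating set of G of size at most |X| + |Y| + (Δ+1)·|B|. -/

import Mathlib

/-- `(X, f)` is a capacitated dominating set of the induced subgraph `G[A]`. -/
def CapDomOn {V : Type*} (G : SimpleGraph V) (cap : V → ℕ) (A X : Set V) (f : V → V) : Prop :=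
  X ⊆ A ∧ (∀ v ∈ A \ X, f v ∈ X ∧ G.Adj (f v) v) ∧
    ∀ x ∈ X, ((A \ X) ∩ f ⁻¹' {x}).ncard ≤ cap x

/-- The closed neighborhood `N[B]` of a vertex set `B` in `G`. -/
def closedNbhd {V : Type*} (G : SimpleGraph V) (B : Set V) : Set V :=
  {v | v ∈ B ∨ ∃ b ∈ B, G.Adj b v}

lemma closedNbhd_insert {V : Type*} (G : SimpleGraph V) (b : V) (B : Set V) :
    closedNbhd G (insert b B) = (insert b (G.neighborSet b)) ∪ closedNbhd G B := by
  ext v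
  simp only [closedNbhd, Set.mem_insert_iff, Set.mem_setOf_eq, Set.mem_union,
    SimpleGraph.mem_neighborSet]
  constructor
  · rintro (⟨rfl | hv⟩ | ⟨c, rfl | hc, hadj⟩)
    · exact Or.inl (Or.inl rfl)
    · exact Or.inr (Or.inl hv)
    · exact Or.inl (Or.inr hadj)
    · exact Or.inr (Or.inr ⟨c, hc, hadj⟩)
  · rintro ((rfl | hadj) | (hv | ⟨c, hc, hadj⟩))
    · exact Or.inl (Or.inl rfl)
    · exact Or.inr ⟨b, Or.inl rfl, hadj⟩
    · exact Or.inl (Or.inr hv)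
    · exact Or.inr ⟨c, Or.inr hc, hadj⟩

lemma closedNbhd_card_le {V : Type*} [Fintype V] (G : SimpleGraph V) (Δ : ℕ)
    (hΔ : ∀ v : V, (G.neighborSet v).ncard ≤ Δ) (B : Set V) :
    (closedNbhd G B).ncard ≤ (Δ + 1) * B.ncard := by
  refine Set.Finite.induction_on (motive := fun s _ => (closedNbhd G s).ncard ≤ (Δ + 1) * s.ncard)
    B B.toFinite ?_ ?_
  · have : closedNbhd G (∅ : Set V) = ∅ := by
      ext v; simp [closedNbhd]
    simp [this]
  · intro b B hb hBfin ih
    rw [closedNbhd_insert, Set.ncard_insert_of_notMem hb B.toFinite,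
      mul_add, mul_one]
    calc ((insert b (G.neighborSet b)) ∪ closedNbhd G B).ncard
        ≤ (insert b (G.neighborSet b)).ncard + (closedNbhd G B).ncard :=
          Set.ncard_union_le _ _
      _ ≤ (Δ + 1) + (Δ + 1) * B.ncard := by
          have h1 : (insert b (G.neighborSet b)).ncard ≤ (G.neighborSet b).ncard + 1 :=
            Set.ncard_insert_le _ _
          have h2 := hΔ b
          omega
      _ = (Δ + 1) * B.ncard + (Δ + 1) := by ring

lemma aux_cap {V : Type*} [Fintype V] (G : SimpleGraph V) (cap : V → ℕ)
    (A B C : Set V) (hB : A ∩ C = B)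
    (hsep : ∀ a ∈ A \ B, ∀ c ∈ C \ B, ¬ G.Adj a c)
    (X Y : Set V) (f g h : V → V)
    (hXA : X ⊆ A)
    (hXdom : ∀ v ∈ A \ X, f v ∈ X ∧ G.Adj (f v) v)
    (hXcap : ∀ x ∈ X, ((A \ X) ∩ f ⁻¹' {x}).ncard ≤ cap x)
    (hYdom : ∀ v ∈ C \ Y, g v ∈ Y ∧ G.Adj (g v) v)
    (Z : Set V) (hXZ : X ⊆ Z) (hYZ : Y ⊆ Z) (hNZ : closedNbhd G B ⊆ Z)
    (hhA : ∀ v ∈ A \ Z, h v = f v) (hhC : ∀ v ∈ C \ Z, h v = g v)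
    (hcov : ∀ v : V, v ∈ A ∨ v ∈ C)
    (x v₀ : V) (hv₀ : v₀ ∈ A \ Z) (hv₀x : h v₀ = x) :
    ((Set.univ \ Z) ∩ h ⁻¹' {x}).ncard ≤ cap x := by
  have hBA : B ⊆ A := by rw [← hB]; exact Set.inter_subset_left
  have hBC : B ⊆ C := by rw [← hB]; exact Set.inter_subset_right
  have hBZ : B ⊆ Z := fun b hb => hNZ (Or.inl hb)
  have hv₀X : v₀ ∈ A \ X := ⟨hv₀.1, fun hx => hv₀.2 (hXZ hx)⟩
  have hfx := hXdom v₀ hv₀X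
  have hxeq : f v₀ = x := by rw [← hhA v₀ hv₀, hv₀x]
  have hxX : x ∈ X := hxeq ▸ hfx.1
  have hxadj : G.Adj x v₀ := hxeq ▸ hfx.2
  have hv₀B : v₀ ∉ B := fun hb => hv₀.2 (hBZ hb)
  have hxB : x ∉ B := fun hb => hv₀.2 (hNZ (Or.inr ⟨x, hb, hxadj⟩))
  have hxAB : x ∈ A \ B := ⟨hXA hxX, hxB⟩
  have hsub : (Set.univ \ Z) ∩ h ⁻¹' {x} ⊆ (A \ X) ∩ f ⁻¹' {x} := by
    rintro v ⟨⟨-, hvZ⟩, hvx⟩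
    have hvx : h v = x := hvx
    have hvA : v ∈ A := by
      rcases hcov v with hvA | hvC
      · exact hvA
      · by_contra hvA
        have hvB : v ∉ B := fun hb => hvA (hBA hb)
        have hvCZ : v ∈ C \ Z := ⟨hvC, hvZ⟩
        have hgv : g v = x := by rw [← hhC v hvCZ, hvx]
        have := (hYdom v ⟨hvC, fun hy => hvZ (hYZ hy)⟩).2
        rw [hgv] at this
        exact hsep x hxAB v ⟨hvC, hvB⟩ this
    have hvAZ : v ∈ A \ Z := ⟨hvA, hvZ⟩
    refine ⟨⟨hvA, fun hx' => hvZ (hXZ hx')⟩, ?_⟩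
    show f v = x
    rw [← hhA v hvAZ, hvx]
  calc ((Set.univ \ Z) ∩ h ⁻¹' {x}).ncard
      ≤ ((A \ X) ∩ f ⁻¹' {x}).ncard :=
        Set.ncard_le_ncard hsub (Set.toFinite _)
    _ ≤ cap x := hXcap x hxX

/-- Combining capacitated dominating sets `(X, f)` of `G[A]` and `(Y, g)` of `G[C]`:
`Z = X ∪ Y ∪ N[B]`, with the assignment sending `v ∈ A \ Z` to `f v` and `v ∈ C \ Z`
to `g v`, is a capacitated dominating set of `G` of size at most
`|X| + |Y| + (Δ + 1) * |B|`. -/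
theorem capDom_combine {V : Type*} [Fintype V]
    (G : SimpleGraph V) (cap : V → ℕ) (Δ : ℕ)
    (hΔ : ∀ v : V, (G.neighborSet v).ncard ≤ Δ)
    (A B C : Set V) (hAC : A ∪ C = Set.univ) (hB : A ∩ C = B)
    (hsep : ∀ a ∈ A \ B, ∀ c ∈ C \ B, ¬ G.Adj a c)
    (X Y : Set V) (f g : V → V)
    (hX : CapDomOn G cap A X f) (hY : CapDomOn G cap C Y g)
    (Z : Set V) (hZ : Z = X ∪ Y ∪ closedNbhd G B)
    (h : V → V)
    (hhA : ∀ v ∈ A \ Z, h v = f v) (hhC : ∀ v ∈ C \ Z, h v = g v) :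
    CapDomOn G cap Set.univ Z h ∧ Z.ncard ≤ X.ncard + Y.ncard + (Δ + 1) * B.ncard := by
  obtain ⟨hXA, hXdom, hXcap⟩ := hX
  obtain ⟨hYC, hYdom, hYcap⟩ := hY
  have hcov : ∀ v : V, v ∈ A ∨ v ∈ C := by
    intro v
    have : v ∈ A ∪ C := by rw [hAC]; trivial
    exact this
  have hXZ : X ⊆ Z := by rw [hZ]; exact fun v hv => Or.inl (Or.inl hv)
  have hYZ : Y ⊆ Z := by rw [hZ]; exact fun v hv => Or.inl (Or.inr hv)
  have hNZ : closedNbhd G B ⊆ Z := by rw [hZ]; exact fun v hv => Or.inr hv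
  have hB' : C ∩ A = B := by rw [Set.inter_comm]; exact hB
  have hsep' : ∀ c ∈ C \ B, ∀ a ∈ A \ B, ¬ G.Adj c a :=
    fun c hc a ha hadj => hsep a ha c hc hadj.symm
  have hcov' : ∀ v : V, v ∈ C ∨ v ∈ A := fun v => (hcov v).symm
  constructor
  · refine ⟨Set.subset_univ _, ?_, ?_⟩
    · rintro v ⟨-, hvZ⟩
      rcases hcov v with hvA | hvC
      · have hvAZ : v ∈ A \ Z := ⟨hvA, hvZ⟩
        have hvAX : v ∈ A \ X := ⟨hvA, fun hx => hvZ (hXZ hx)⟩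
        have := hXdom v hvAX
        rw [hhA v hvAZ]
        exact ⟨hXZ this.1, this.2⟩
      · have hvCZ : v ∈ C \ Z := ⟨hvC, hvZ⟩
        have hvCY : v ∈ C \ Y := ⟨hvC, fun hy => hvZ (hYZ hy)⟩
        have := hYdom v hvCY
        rw [hhC v hvCZ]
        exact ⟨hYZ this.1, this.2⟩
    · intro x hxZ
      rcases Set.eq_empty_or_nonempty ((Set.univ \ Z) ∩ h ⁻¹' {x}) with he | ⟨v₀, hv₀⟩
      · simp [he]
      · obtain ⟨⟨-, hv₀Z⟩, hv₀x⟩ := hv₀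
        have hv₀x : h v₀ = x := hv₀x
        rcases hcov v₀ with hvA | hvC
        · exact aux_cap G cap A B C hB hsep X Y f g h hXA hXdom hXcap hYdom
            Z hXZ hYZ hNZ hhA hhC hcov x v₀ ⟨hvA, hv₀Z⟩ hv₀x
        · exact aux_cap G cap C B A hB' hsep' Y X g f h hYC hYdom hYcap hXdom
            Z hYZ hXZ hNZ hhC hhA hcov' x v₀ ⟨hvC, hv₀Z⟩ hv₀x
  · rw [hZ]
    calc (X ∪ Y ∪ closedNbhd G B).ncard
        ≤ (X ∪ Y).ncard + (closedNbhd G B).ncard := Set.ncard_union_le _ _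
      _ ≤ X.ncard + Y.ncard + (closedNbhd G B).ncard := by
          have := Set.ncard_union_le X Y
          omega
      _ ≤ X.ncard + Y.ncard + (Δ + 1) * B.ncard := by
          have := closedNbhd_card_le G Δ hΔ B
          omega
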